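/- Let Φ = C_n^φ be a quaternion unit gain cycle with gain product φ(C_n) = φ_{v₁v₂}φ_{v₂v₃}⋯φ_{v_n v₁}. If n is even and φ(C_n) = (-1)^{n/2}, then the row left rank of A(Φ) is n - 2; if n is even and φ(C_n) ≠ (-1)^{n/2}, the rank is n; if n is odd and Re((-1)^{(n-1)/2} φ(C_n)) ≠ 0, the rank is n; and if n is odd and Re((-1)^{(n-1)/2} φ(C_n)) = 0, the rank is n - 1. -/

import Mathlib

/-- The row left rank of a quaternion matrix: the rank (dimension of the span, with
quaternion scalars acting on the left) of the set of rows of `A`. -/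
noncomputable def rowLeftRank {m n : Type*} (A : Matrix m n (Quaternion ℝ)) : ℕ :=
  (Module.rank (Quaternion ℝ)
    (Submodule.span (Quaternion ℝ) (Set.range (fun i j => A i j)))).toNat

/-- The row right rank: scalars act on the right, i.e. over the opposite ring. -/
noncomputable def rowRightRank {m n : Type*} (A : Matrix m n (Quaternion ℝ)) : ℕ :=
  (Module.rank (Quaternion ℝ)ᵐᵒᵖ
    (Submodule.span (Quaternion ℝ)ᵐᵒᵖ (Set.range (fun i j => A i j)))).toNat

/-- The column right rank: the span of the columns with scalars acting on the right. -/
noncomputable def colRightRank {m n : Type*} (A : Matrix m n (Quaternion ℝ)) : ℕ :=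
  (Module.rank (Quaternion ℝ)ᵐᵒᵖ
    (Submodule.span (Quaternion ℝ)ᵐᵒᵖ (Set.range (fun j i => A i j)))).toNat

/-- A quaternion unit gain graph on vertex type `V`. -/
structure QuaternionUnitGainGraph (V : Type*) where
  G : SimpleGraph V
  gain : V → V → Quaternion ℝ
  gain_unit : ∀ u v, G.Adj u v → ‖gain u v‖ = 1
  gain_inv : ∀ u v, G.Adj u v → gain v u = star (gain u v)
  gain_zero : ∀ u v, ¬ G.Adj u v → gain u v = 0

/-- The (Hermitian, quaternion) adjacency matrix of a quaternion unit gain graph. -/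
def QuaternionUnitGainGraph.adjMatrix {V : Type*} (Φ : QuaternionUnitGainGraph V) :
    Matrix V V (Quaternion ℝ) := fun u v => Φ.gain u v

/-- The row left rank of a quaternion unit gain graph. -/
noncomputable def QuaternionUnitGainGraph.rank {V : Type*} (Φ : QuaternionUnitGainGraph V) : ℕ :=
  rowLeftRank Φ.adjMatrix


open Quaternion
open Fin.NatCast
open Fin.CommRing

namespace GainCycleAux

/-- ordered product of `q a, q (a+1), ..., q (a+k-1)` -/
noncomputable def Pr (q : ℕ → Quaternion ℝ) (a k : ℕ) : Quaternion ℝ :=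
  ((List.range k).map (fun t => q (a + t))).prod

@[simp] lemma Pr_zero (q : ℕ → Quaternion ℝ) (a : ℕ) : Pr q a 0 = 1 := rfl

lemma Pr_succ (q : ℕ → Quaternion ℝ) (a k : ℕ) : Pr q a (k + 1) = Pr q a k * q (a + k) := by
  simp [Pr, List.range_succ]

lemma Pr_add (q : ℕ → Quaternion ℝ) (a k m : ℕ) :
    Pr q a (k + m) = Pr q a k * Pr q (a + k) m := by
  induction m with
  | zero => simp
  | succ m ih => rw [← Nat.add_assoc, Pr_succ, ih, Pr_succ, mul_assoc, Nat.add_assoc]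

lemma neg_one_pow_comm (z : Quaternion ℝ) (j : ℕ) :
    (-1 : Quaternion ℝ) ^ j * z = z * (-1 : Quaternion ℝ) ^ j :=
  ((Commute.neg_one_left z).pow_left j).eq

lemma neg_one_pow_mul_self (j : ℕ) :
    (-1 : Quaternion ℝ) ^ j * (-1 : Quaternion ℝ) ^ j = 1 := by
  rw [← pow_add, ← two_mul, pow_mul]; simp

lemma step (q : ℕ → Quaternion ℝ) (a s : ℕ) (c : Quaternion ℝ) :
    (-1 : Quaternion ℝ) ^ ((s + 2) / 2) * c * Pr q a (s + 2) =
      -((-1 : Quaternion ℝ) ^ (s / 2) * c * Pr q a s) * q (a + s) * q (a + s + 1) := by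
  have h2 : (s + 2) / 2 = s / 2 + 1 := by omega
  rw [h2, pow_succ, show s + 2 = (s + 1) + 1 from rfl, Pr_succ, Pr_succ,
    show a + (s + 1) = a + s + 1 from rfl]
  noncomm_ring

lemma Pr_norm (q : ℕ → Quaternion ℝ) (hq : ∀ k, ‖q k‖ = 1) (a k : ℕ) : ‖Pr q a k‖ = 1 := by
  induction k with
  | zero => simp
  | succ k ih => rw [Pr_succ, norm_mul, ih, hq]; ring

lemma star_mul_self_of_norm_one {u : Quaternion ℝ} (h : ‖u‖ = 1) : star u * u = 1 := by
  rw [star_mul_self, normSq_eq_norm_mul_self, h]; simp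

lemma quat_sq (a : Quaternion ℝ) :
    a * a = ((2 * a.re : ℝ) : Quaternion ℝ) * a - ((normSq a : ℝ) : Quaternion ℝ) := by
  ext <;> simp [normSq_def', ← Quaternion.coe_pow] <;> ring

lemma sq_eq_neg_one_iff {g : Quaternion ℝ} (hg : ‖g‖ = 1) : g * g = -1 ↔ g.re = 0 := by
  have hns : ((normSq g : ℝ) : Quaternion ℝ) = 1 := by
    rw [normSq_eq_norm_mul_self, hg]; simp
  rw [quat_sq, hns]
  constructor
  · intro h
    have h0 : ((2 * g.re : ℝ) : Quaternion ℝ) * g = 0 := by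
      have := congrArg (· + 1) h
      simpa [sub_add_cancel] using this
    have hg0 : g ≠ 0 := by
      intro h'; rw [h'] at hg; simp at hg
    rcases mul_eq_zero.mp h0 with h' | h'
    · have h2 : (2 * g.re : ℝ) = 0 := by
        have : ((2 * g.re : ℝ) : Quaternion ℝ) = ((0 : ℝ) : Quaternion ℝ) := by
          rw [h']; simp
        have := Quaternion.coe_injective this
        linarith
      linarith
    · exact absurd h' hg0
  · intro h; rw [h]; simp

lemma re_coe_mul (r : ℝ) (g : Quaternion ℝ) : ((r : Quaternion ℝ) * g).re = r * g.re := by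
  simp [Quaternion.re_mul]

end GainCycleAux
namespace GainCycleAux

variable {n : ℕ}

lemma fin_cast_add_n [NeZero n] (k : ℕ) : ((k + n : ℕ) : Fin n) = (k : Fin n) := by
  push_cast [Fin.natCast_self]; ring

lemma periodic_mod {α : Type*} (V : ℕ → α) [NeZero n] (hper : ∀ m, V (m + n) = V m) (m : ℕ) :
    V (m % n) = V m := by
  induction m using Nat.strong_induction_on with
  | _ m ih =>
    rcases lt_or_ge m n with h | h
    · rw [Nat.mod_eq_of_lt h]
    · have hn : 0 < n := Nat.pos_of_ne_zero (NeZero.ne n)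
      have h1 : m - n < m := by omega
      have h2 : m % n = (m - n) % n := by
        conv_lhs => rw [show m = (m - n) + n by omega]
        rw [Nat.add_mod_right]
      rw [h2, ih (m - n) h1]
      conv_rhs => rw [show m = (m - n) + n by omega]
      rw [hper]

/-- closed form for solutions of the two–step recurrence -/
lemma closed_form [NeZero n] (q : ℕ → Quaternion ℝ) (x : Fin n → Quaternion ℝ)
    (hrec : ∀ k : ℕ, x ((k + 2 : ℕ) : Fin n) = - x ((k : ℕ) : Fin n) * q k * q (k + 1))
    (a : ℕ) : ∀ m : ℕ, x ((a + 2 * m : ℕ) : Fin n) =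
      (-1 : Quaternion ℝ) ^ m * x ((a : ℕ) : Fin n) * Pr q a (2 * m) := by
  intro m
  induction m with
  | zero => simp
  | succ m ih =>
    have h1 : a + 2 * (m + 1) = (a + 2 * m) + 2 := by ring
    have h2 : 2 * (m + 1) = (2 * m + 1) + 1 := by ring
    rw [h1, hrec (a + 2 * m), ih, h2, Pr_succ, Pr_succ,
      show a + (2 * m + 1) = a + 2 * m + 1 from rfl]
    rw [pow_succ]
    noncomm_ring

end GainCycleAux
namespace GainCycleAux

noncomputable def rowMapLin {n : ℕ} (A : Matrix (Fin n) (Fin n) (Quaternion ℝ)) :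
    (Fin n → Quaternion ℝ) →ₗ[Quaternion ℝ] (Fin n → Quaternion ℝ) where
  toFun x := fun j => ∑ i, x i * A i j
  map_add' x y := by funext j; simp [add_mul, Finset.sum_add_distrib]
  map_smul' c x := by
    funext j
    simp only [Pi.smul_apply, smul_eq_mul, RingHom.id_apply, Finset.mul_sum, mul_assoc]

lemma range_rowMapLin {n : ℕ} (A : Matrix (Fin n) (Fin n) (Quaternion ℝ)) :
    LinearMap.range (rowMapLin A) =
      Submodule.span (Quaternion ℝ) (Set.range (fun i j => A i j)) := by
  apply le_antisymm
  · rintro _ ⟨x, rfl⟩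
    have hx : (rowMapLin A) x = ∑ i, x i • (fun j => A i j) := by
      funext j
      simp [rowMapLin, Finset.sum_apply]
    rw [hx]
    exact Submodule.sum_mem _ fun i _ =>
      Submodule.smul_mem _ _ (Submodule.subset_span (Set.mem_range_self i))
  · rw [Submodule.span_le]
    rintro _ ⟨i, rfl⟩
    refine ⟨Pi.single i 1, ?_⟩
    funext j
    simp [rowMapLin, Pi.single_apply, Finset.sum_ite_eq]

lemma rowLeftRank_add_ker {n : ℕ} (A : Matrix (Fin n) (Fin n) (Quaternion ℝ)) :
    rowLeftRank A + Module.finrank (Quaternion ℝ) (LinearMap.ker (rowMapLin A)) = n := by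
  have h1 : rowLeftRank A
      = Module.finrank (Quaternion ℝ) (LinearMap.range (rowMapLin A)) := by
    rw [range_rowMapLin]; rfl
  rw [h1, LinearMap.finrank_range_add_finrank_ker]
  simp [Module.finrank_pi]

end GainCycleAux
namespace GainCycleAux

/-- candidate kernel element for the even case -/
noncomputable def Vg (q : ℕ → Quaternion ℝ) (c0 c1 : Quaternion ℝ) (m : ℕ) : Quaternion ℝ :=
  if Even m then (-1 : Quaternion ℝ) ^ (m / 2) * c0 * Pr q 0 m
  else (-1 : Quaternion ℝ) ^ (m / 2) * c1 * Pr q 1 (m - 1)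

lemma Vg_rec (q : ℕ → Quaternion ℝ) (c0 c1 : Quaternion ℝ) (k : ℕ) :
    Vg q c0 c1 (k + 2) = - Vg q c0 c1 k * q k * q (k + 1) := by
  rcases Nat.even_or_odd k with he | ho
  · rw [Vg, Vg, if_pos he, if_pos (by rcases he with ⟨t, ht⟩; exact ⟨t + 1, by omega⟩ : Even (k + 2))]
    have := step q 0 k c0
    simpa [zero_add, neg_mul] using this
  · obtain ⟨t, rfl⟩ := ho
    rw [Vg, Vg, if_neg (by rintro ⟨s, hs⟩; omega : ¬ Even (2 * t + 1)),
      if_neg (by rintro ⟨s, hs⟩; omega : ¬ Even (2 * t + 1 + 2))]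
    have := step q 1 (2 * t) c1
    rw [show (2 * t + 1 + 2) / 2 = (2 * t + 2) / 2 by omega,
      show (2 * t + 1) / 2 = 2 * t / 2 by omega,
      show 2 * t + 1 + 2 - 1 = 2 * t + 2 by omega,
      show 2 * t + 1 - 1 = 2 * t by omega,
      show 2 * t + 1 = 1 + 2 * t by omega]
    exact this

section
variable {n : ℕ} (q : ℕ → Quaternion ℝ) (hper : ∀ k, q (k + n) = q k)

include hper in
lemma Pr_shift (a m : ℕ) : Pr q (a + n) m = Pr q a m := by
  unfold Pr
  congr 1
  apply List.map_congr_left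
  intro t _
  rw [show a + n + t = (a + t) + n by omega, hper]

include hper in
lemma Pr_cycle (a m : ℕ) : Pr q a (m + n) = Pr q a n * Pr q a m := by
  rw [show m + n = n + m by omega, Pr_add, Pr_shift q hper]

include hper in
lemma wrap_conj : q 0 * Pr q 1 n = Pr q 0 n * q 0 := by
  have h1 : Pr q 0 (n + 1) = Pr q 0 n * q 0 := by
    rw [Pr_succ, hper 0]
  have h2 : Pr q 0 (1 + n) = q 0 * Pr q 1 n := by
    rw [Pr_add q 0 1 n, show Pr q 0 1 = q 0 by rw [Pr_succ]; simp, zero_add]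
  rw [← h1, ← h2, Nat.add_comm]

include hper in
lemma Vg_per (hne : Even n) (c0 c1 : Quaternion ℝ)
    (hPr0 : Pr q 0 n = (-1 : Quaternion ℝ) ^ (n / 2))
    (hPr1 : Pr q 1 n = (-1 : Quaternion ℝ) ^ (n / 2)) (m : ℕ) :
    Vg q c0 c1 (m + n) = Vg q c0 c1 m := by
  have hdiv : (m + n) / 2 = m / 2 + n / 2 := by
    obtain ⟨t, rfl⟩ := hne; omega
  rcases Nat.even_or_odd m with he | ho
  · rw [Vg, Vg, if_pos he, if_pos (by rcases he with ⟨t, rfl⟩; rcases hne with ⟨s, rfl⟩; exact ⟨t + s, by omega⟩),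
      Pr_cycle q hper, hPr0, hdiv, pow_add]
    calc (-1 : Quaternion ℝ) ^ (m / 2) * (-1 : Quaternion ℝ) ^ (n / 2) * c0 *
          ((-1 : Quaternion ℝ) ^ (n / 2) * Pr q 0 m)
        = (-1 : Quaternion ℝ) ^ (m / 2) * ((-1 : Quaternion ℝ) ^ (n / 2) * c0 *
          (-1 : Quaternion ℝ) ^ (n / 2)) * Pr q 0 m := by noncomm_ring
      _ = (-1 : Quaternion ℝ) ^ (m / 2) * c0 * Pr q 0 m := by
          rw [neg_one_pow_comm c0 (n / 2), mul_assoc _ ((-1 : Quaternion ℝ) ^ (n/2)),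
            neg_one_pow_mul_self, mul_one]
  · have hm1 : m + n - 1 = (m - 1) + n := by
      obtain ⟨t, rfl⟩ := ho; omega
    rw [Vg, Vg, if_neg (by simp [Nat.even_add, hne, Nat.not_even_iff_odd.mpr ho]),
      if_neg (by simp [Nat.not_even_iff_odd.mpr ho]), hm1, Pr_cycle q hper, hPr1, hdiv, pow_add]
    calc (-1 : Quaternion ℝ) ^ (m / 2) * (-1 : Quaternion ℝ) ^ (n / 2) * c1 *
          ((-1 : Quaternion ℝ) ^ (n / 2) * Pr q 1 (m - 1))
        = (-1 : Quaternion ℝ) ^ (m / 2) * ((-1 : Quaternion ℝ) ^ (n / 2) * c1 *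
          (-1 : Quaternion ℝ) ^ (n / 2)) * Pr q 1 (m - 1) := by noncomm_ring
      _ = (-1 : Quaternion ℝ) ^ (m / 2) * c1 * Pr q 1 (m - 1) := by
          rw [neg_one_pow_comm c1 (n / 2), mul_assoc _ ((-1 : Quaternion ℝ) ^ (n/2)),
            neg_one_pow_mul_self, mul_one]

end

/-- candidate kernel element for the odd case -/
noncomputable def Vodd (n : ℕ) (q : ℕ → Quaternion ℝ) (m : ℕ) : Quaternion ℝ :=
  (-1 : Quaternion ℝ) ^ ((if Even m then m else m + n) / 2) *
    Pr q 0 (if Even m then m else m + n)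

section
variable {n : ℕ} (q : ℕ → Quaternion ℝ) (hper : ∀ k, q (k + n) = q k)

include hper in
lemma Vodd_rec (hodd : Odd n) (k : ℕ) :
    Vodd n q (k + 2) = - Vodd n q k * q k * q (k + 1) := by
  rcases Nat.even_or_odd k with he | ho
  · rw [Vodd, Vodd, if_pos he, if_pos (by rcases he with ⟨t, rfl⟩; exact ⟨t + 1, by omega⟩)]
    have := step q 0 k 1
    simpa [zero_add, neg_mul, mul_one] using this
  · rw [Vodd, Vodd, if_neg (Nat.not_even_iff_odd.mpr ho),
      if_neg (by rcases ho with ⟨t, rfl⟩; rintro ⟨s, hs⟩; omega)]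
    have := step q 0 (k + n) 1
    rw [show k + 2 + n = (k + n) + 2 by omega] at *
    have hq1 : q (0 + (k + n)) = q k := by rw [zero_add, hper]
    have hq2 : q (0 + (k + n) + 1) = q (k + 1) := by
      rw [zero_add, show k + n + 1 = (k + 1) + n by omega, hper]
    rw [hq1, hq2] at this
    simpa [neg_mul, mul_one] using this

include hper in
lemma Vodd_per (hodd : Odd n) (hg2 : Pr q 0 n * Pr q 0 n = -1) (m : ℕ) :
    Vodd n q (m + n) = Vodd n q m := by
  rcases Nat.even_or_odd m with he | ho
  · have hno : ¬ Even (m + n) := by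
      rcases he with ⟨t, rfl⟩; rcases hodd with ⟨s, rfl⟩; rintro ⟨r, hr⟩; omega
    rw [Vodd, Vodd, if_neg hno, if_pos he,
      show m + n + n = (m + n) + n from rfl, Pr_cycle q hper, Pr_cycle q hper]
    have hd : (m + n + n) / 2 = m / 2 + n := by rcases he with ⟨t, rfl⟩; rcases hodd with ⟨s, rfl⟩; omega
    have hmm : Pr q 0 n * (Pr q 0 n * Pr q 0 m) = - Pr q 0 m := by
      rw [← mul_assoc, hg2]; noncomm_ring
    rw [hmm, hd, pow_add, hodd.neg_one_pow]
    noncomm_ring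
  · have hyes : Even (m + n) := by
      rcases ho with ⟨t, rfl⟩; rcases hodd with ⟨s, rfl⟩; exact ⟨t + s + 1, by omega⟩
    rw [Vodd, Vodd, if_pos hyes, if_neg (Nat.not_even_iff_odd.mpr ho)]

end

end GainCycleAux

open GainCycleAux

/-- The row left rank of a quaternion unit gain cycle `C_n^φ` (`n ≥ 3`), in terms
of the gain product `φ(C_n) = φ_{v₁v₂}φ_{v₂v₃}⋯φ_{vₙv₁}`:
rank `n - 2` if `n` even and `φ(C_n) = (-1)^{n/2}`; rank `n` if `n` even and
`φ(C_n) ≠ (-1)^{n/2}`; rank `n` if `n` odd and `Re((-1)^{(n-1)/2}φ(C_n)) ≠ 0`;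
rank `n - 1` if `n` odd and `Re((-1)^{(n-1)/2}φ(C_n)) = 0`. -/
theorem gainCycle_rank {n : ℕ} (hn : 3 ≤ n) (Φ : QuaternionUnitGainGraph (Fin n))
    (hG : Φ.G = SimpleGraph.cycleGraph n)
    (g : Quaternion ℝ)
    (hg : g = ((List.finRange n).map (fun i => Φ.gain i (i + ⟨1, by omega⟩))).prod) :
    (Even n → g = (-1 : Quaternion ℝ) ^ (n / 2) → Φ.rank = n - 2) ∧
    (Even n → g ≠ (-1 : Quaternion ℝ) ^ (n / 2) → Φ.rank = n) ∧
    (Odd n → ((-1 : Quaternion ℝ) ^ ((n - 1) / 2) * g).re ≠ 0 → Φ.rank = n) ∧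
    (Odd n → ((-1 : Quaternion ℝ) ^ ((n - 1) / 2) * g).re = 0 → Φ.rank = n - 1) := by
  classical
  haveI : NeZero n := ⟨by omega⟩
  have hval1 : (1 : Fin n).val = 1 := by
    rw [Fin.val_one', Nat.mod_eq_of_lt (by omega)]
  have hval0 : (0 : Fin n).val = 0 := rfl
  set Q : Fin n → Quaternion ℝ := fun j => Φ.gain j (j + 1) with hQdef
  set q : ℕ → Quaternion ℝ := fun k => Q ((k : ℕ) : Fin n) with hqdef
  -- adjacency characterization
  have hAdj : ∀ i j : Fin n, Φ.G.Adj i j ↔ (i = j + 1 ∨ j = i + 1) := by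
    intro i j
    rw [hG, SimpleGraph.cycleGraph_adj']
    have h1 : ∀ u v : Fin n, (u - v).val = 1 ↔ u = v + 1 := by
      intro u v
      rw [show (1 : ℕ) = (1 : Fin n).val from hval1.symm, ← Fin.ext_iff,
        sub_eq_iff_eq_add, add_comm]
    rw [h1, h1]
  have hadj : ∀ j : Fin n, Φ.G.Adj j (j + 1) := fun j => (hAdj _ _).mpr (Or.inr rfl)
  have hQnorm : ∀ j : Fin n, ‖Q j‖ = 1 := fun j => Φ.gain_unit _ _ (hadj j)
  have hqnorm : ∀ k, ‖q k‖ = 1 := fun k => hQnorm _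
  have hper : ∀ k, q (k + n) = q k := by
    intro k
    show Q (((k + n : ℕ)) : Fin n) = Q ((k : ℕ) : Fin n)
    rw [fin_cast_add_n]
  -- identify g with the product Pr q 0 n
  have hone : (⟨1, by omega⟩ : Fin n) = 1 := by
    ext
    rw [Fin.val_one', (Nat.mod_eq_of_lt (by omega))]
  have hgPr : g = Pr q 0 n := by
    rw [hg]
    have h1 : (fun i : Fin n => Φ.gain i (i + ⟨1, by omega⟩)) = Q := by
      funext i
      rw [hone]
    rw [h1]
    unfold Pr
    rw [← (show (List.finRange n).map Fin.val = List.range n by simp), List.map_map]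
    congr 1
    apply List.map_congr_left
    intro i _
    show Q i = q (0 + i.val)
    rw [zero_add]
    show Q i = Q ((i.val : ℕ) : Fin n)
    rw [Fin.cast_val_eq_self]
  have hgnorm : ‖g‖ = 1 := by rw [hgPr]; exact Pr_norm q hqnorm 0 n
  -- the column structure of the adjacency matrix
  have hcol : ∀ (x : Fin n → Quaternion ℝ) (j : Fin n),
      rowMapLin Φ.adjMatrix x j = x (j - 1) * Q (j - 1) + x (j + 1) * star (Q j) := by
    intro x j
    have hzero : ∀ i : Fin n, i ≠ j - 1 → i ≠ j + 1 → Φ.adjMatrix i j = 0 := by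
      intro i h1 h2
      apply Φ.gain_zero
      intro hadj'
      rcases (hAdj i j).mp hadj' with h | h
      · exact h2 h
      · exact h1 (by rw [h, add_sub_cancel_right])
    have hne : (j - 1) ≠ (j + 1) := by
      intro h
      have h4 : ((2 : ℕ) : Fin n) = 0 := by
        push_cast
        calc (2 : Fin n) = (j + 1) - (j - 1) := by ring
          _ = 0 := by rw [← h]; ring
      have h6 := congrArg Fin.val h4
      rw [Fin.val_natCast, hval0, Nat.mod_eq_of_lt (by omega)] at h6
      omega
    calc rowMapLin Φ.adjMatrix x j = ∑ i, x i * Φ.adjMatrix i j := rfl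
      _ = ∑ i ∈ ({j - 1, j + 1} : Finset (Fin n)), x i * Φ.adjMatrix i j := by
          refine (Finset.sum_subset (Finset.subset_univ _) ?_).symm
          intro i _ hi
          simp only [Finset.mem_insert, Finset.mem_singleton, not_or] at hi
          rw [hzero i hi.1 hi.2, mul_zero]
      _ = x (j - 1) * Φ.adjMatrix (j - 1) j + x (j + 1) * Φ.adjMatrix (j + 1) j :=
          Finset.sum_pair hne
      _ = x (j - 1) * Q (j - 1) + x (j + 1) * star (Q j) := by
          congr 1
          · show x (j - 1) * Φ.gain (j - 1) j = x (j - 1) * Q (j - 1)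
            congr 1
            show Φ.gain (j - 1) j = Φ.gain (j - 1) ((j - 1) + 1)
            rw [sub_add_cancel]
          · show x (j + 1) * Φ.gain (j + 1) j = x (j + 1) * star (Q j)
            congr 1
            exact Φ.gain_inv j (j + 1) (hadj j)
  -- kernel characterization
  have hkerN : ∀ x : Fin n → Quaternion ℝ,
      x ∈ LinearMap.ker (rowMapLin Φ.adjMatrix) ↔
      ∀ k : ℕ, x (((k + 2 : ℕ)) : Fin n) =
        - x ((k : ℕ) : Fin n) * q k * q (k + 1) := by
    intro x
    rw [LinearMap.mem_ker]
    constructor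
    · intro h0 k
      have hj := congrFun h0 (((k + 1 : ℕ)) : Fin n)
      rw [hcol] at hj
      have e1 : ((k + 1 : ℕ) : Fin n) - 1 = ((k : ℕ) : Fin n) := by push_cast; ring
      have e2 : ((k + 1 : ℕ) : Fin n) + 1 = ((k + 2 : ℕ) : Fin n) := by push_cast; ring
      rw [e1, e2, Pi.zero_apply] at hj
      have hj' : x ((k + 2 : ℕ) : Fin n) * star (Q ((k + 1 : ℕ) : Fin n)) =
          -(x ((k : ℕ) : Fin n) * Q ((k : ℕ) : Fin n)) :=
        eq_neg_of_add_eq_zero_right hj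
      have hQQ : star (Q ((k + 1 : ℕ) : Fin n)) * Q ((k + 1 : ℕ) : Fin n) = 1 :=
        star_mul_self_of_norm_one (hQnorm _)
      calc x ((k + 2 : ℕ) : Fin n)
          = x ((k + 2 : ℕ) : Fin n) *
            (star (Q ((k + 1 : ℕ) : Fin n)) * Q ((k + 1 : ℕ) : Fin n)) := by
            rw [hQQ, mul_one]
        _ = (x ((k + 2 : ℕ) : Fin n) * star (Q ((k + 1 : ℕ) : Fin n))) *
            Q ((k + 1 : ℕ) : Fin n) := by rw [mul_assoc]
        _ = (-(x ((k : ℕ) : Fin n) * Q ((k : ℕ) : Fin n))) * Q ((k + 1 : ℕ) : Fin n) := by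
            rw [hj']
        _ = - x ((k : ℕ) : Fin n) * q k * q (k + 1) := by
            show _ = - x ((k : ℕ) : Fin n) * Q ((k : ℕ) : Fin n) * Q ((k + 1 : ℕ) : Fin n)
            rw [neg_mul, neg_mul, neg_mul]
    · intro h
      funext j
      rw [hcol, Pi.zero_apply]
      have e0 : (((j - 1).val : ℕ) : Fin n) = j - 1 := Fin.cast_val_eq_self _
      have e1 : (((j - 1).val + 1 : ℕ) : Fin n) = j := by
        push_cast [e0]
        exact sub_add_cancel j 1
      have e2 : (((j - 1).val + 2 : ℕ) : Fin n) = j + 1 := by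
        push_cast [e0]
        ring
      have hk' := h (j - 1).val
      rw [e2, e0] at hk'
      have hq1 : q (j - 1).val = Q (j - 1) := by
        show Q _ = Q (j - 1); rw [e0]
      have hq2 : q ((j - 1).val + 1) = Q j := by
        show Q _ = Q j; rw [e1]
      rw [hq1, hq2] at hk'
      rw [hk']
      have hQQ : Q j * star (Q j) = 1 := by
        rw [self_mul_star, normSq_eq_norm_mul_self, hQnorm]
        simp
      calc x (j - 1) * Q (j - 1) + - x (j - 1) * Q (j - 1) * Q j * star (Q j)
          = x (j - 1) * Q (j - 1) + - (x (j - 1) * Q (j - 1)) * (Q j * star (Q j)) := by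
            noncomm_ring
        _ = 0 := by rw [hQQ, mul_one]; exact add_neg_cancel _
  have hrankd : ∀ d : ℕ,
      Module.finrank (Quaternion ℝ) (LinearMap.ker (rowMapLin Φ.adjMatrix)) = d →
      Φ.rank = n - d := by
    intro d hd
    have h := rowLeftRank_add_ker Φ.adjMatrix
    rw [hd] at h
    show rowLeftRank Φ.adjMatrix = n - d
    omega
  have hq0ne : q 0 ≠ 0 := by
    intro h
    have := hqnorm 0
    rw [h] at this
    simp at this
  have hcoe : (-1 : Quaternion ℝ) ^ ((n - 1) / 2)
      = (((-1 : ℝ) ^ ((n - 1) / 2) : ℝ) : Quaternion ℝ) := by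
    rw [Quaternion.coe_pow]; norm_num
  refine ⟨?_, ?_, ?_, ?_⟩
  · -- even, degenerate: rank n - 2
    intro hev heq
    have hPr0 : Pr q 0 n = (-1 : Quaternion ℝ) ^ (n / 2) := by rw [← hgPr, heq]
    have hPr1 : Pr q 1 n = (-1 : Quaternion ℝ) ^ (n / 2) := by
      have hw := wrap_conj q hper
      rw [hPr0, neg_one_pow_comm (q 0) (n / 2)] at hw
      exact mul_left_cancel₀ hq0ne hw
    set v0 : Fin n → Quaternion ℝ := fun j => Vg q 1 0 j.val with hv0
    set v1 : Fin n → Quaternion ℝ := fun j => Vg q 0 1 j.val with hv1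
    have hmod : ∀ (c0 c1 : Quaternion ℝ) (m : ℕ),
        Vg q c0 c1 (((m : ℕ) : Fin n)).val = Vg q c0 c1 m := by
      intro c0 c1 m
      rw [Fin.val_natCast]
      exact periodic_mod (Vg q c0 c1) (Vg_per q hper hev c0 c1 hPr0 hPr1) m
    have hmem : ∀ c0 c1 : Quaternion ℝ,
        (fun j : Fin n => Vg q c0 c1 j.val) ∈ LinearMap.ker (rowMapLin Φ.adjMatrix) := by
      intro c0 c1
      rw [hkerN]
      intro k
      show Vg q c0 c1 ((((k + 2 : ℕ)) : Fin n)).val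
        = - Vg q c0 c1 ((((k : ℕ)) : Fin n)).val * q k * q (k + 1)
      rw [hmod, hmod, Vg_rec]
    have hval_v0_even : ∀ (j : Fin n) (t : ℕ), j.val = 2 * t →
        v0 j = (-1 : Quaternion ℝ) ^ t * Pr q 0 (2 * t) := by
      intro j t ht
      show Vg q 1 0 j.val = _
      rw [Vg, if_pos (by rw [ht]; exact ⟨t, by omega⟩), ht,
        show 2 * t / 2 = t by omega, mul_one]
    have hval_v0_odd : ∀ (j : Fin n) (t : ℕ), j.val = 2 * t + 1 → v0 j = 0 := by
      intro j t ht
      show Vg q 1 0 j.val = _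
      rw [Vg, if_neg (by rw [ht]; rintro ⟨s, hs⟩; omega)]
      simp
    have hval_v1_even : ∀ (j : Fin n) (t : ℕ), j.val = 2 * t → v1 j = 0 := by
      intro j t ht
      show Vg q 0 1 j.val = _
      rw [Vg, if_pos (by rw [ht]; exact ⟨t, by omega⟩)]
      simp
    have hval_v1_odd : ∀ (j : Fin n) (t : ℕ), j.val = 2 * t + 1 →
        v1 j = (-1 : Quaternion ℝ) ^ t * Pr q 1 (2 * t) := by
      intro j t ht
      show Vg q 0 1 j.val = _
      rw [Vg, if_neg (by rw [ht]; rintro ⟨s, hs⟩; omega), ht,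
        show (2 * t + 1) / 2 = t by omega, show 2 * t + 1 - 1 = 2 * t by omega, mul_one]
    have hker2 : LinearMap.ker (rowMapLin Φ.adjMatrix)
        = Submodule.span (Quaternion ℝ) (Set.range ![v0, v1]) := by
      apply le_antisymm
      · intro x hx
        have hclosed := closed_form q x ((hkerN x).mp hx)
        have hxeq : x = x ((0 : ℕ) : Fin n) • v0 + x ((1 : ℕ) : Fin n) • v1 := by
          funext j
          rw [Pi.add_apply, Pi.smul_apply, Pi.smul_apply, smul_eq_mul, smul_eq_mul]
          rcases Nat.even_or_odd j.val with ⟨t, ht⟩ | ⟨t, ht⟩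
          · have h1 := hclosed 0 t
            rw [show (0 + 2 * t) = j.val by omega, Fin.cast_val_eq_self] at h1
            rw [h1, hval_v0_even j t (by omega), hval_v1_even j t (by omega), mul_zero,
              add_zero, ← mul_assoc, ← neg_one_pow_comm]
          · have h1 := hclosed 1 t
            rw [show (1 + 2 * t) = j.val by omega, Fin.cast_val_eq_self] at h1
            rw [h1, hval_v1_odd j t (by omega), hval_v0_odd j t (by omega), mul_zero,
              zero_add, ← mul_assoc, ← neg_one_pow_comm]
        rw [hxeq]
        refine Submodule.add_mem _ ?_ ?_
        · exact Submodule.smul_mem _ _ (Submodule.subset_span ⟨0, rfl⟩)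
        · exact Submodule.smul_mem _ _ (Submodule.subset_span ⟨1, rfl⟩)
      · rw [Submodule.span_le]
        rintro _ ⟨i, rfl⟩
        fin_cases i
        · exact hmem 1 0
        · exact hmem 0 1
    have hind : LinearIndependent (Quaternion ℝ) ![v0, v1] := by
      rw [linearIndependent_fin2]
      constructor
      · intro hzero
        have h1 := congrFun hzero (1 : Fin n)
        simp only [Matrix.cons_val_one, Matrix.head_cons, Matrix.cons_val_zero, Pi.zero_apply] at h1
        rw [hval_v1_odd 1 0 (by rw [hval1])] at h1
        simp at h1
      · intro a ha
        have h1 := congrFun ha (0 : Fin n)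
        simp only [Matrix.cons_val_one, Matrix.head_cons, Matrix.cons_val_zero,
          Pi.smul_apply, smul_eq_mul] at h1
        rw [hval_v1_even 0 0 (by rw [hval0]), hval_v0_even 0 0 (by rw [hval0])] at h1
        simp at h1
    refine (hrankd 2 ?_)
    rw [hker2, finrank_span_eq_card hind]
    simp
  · -- even, nondegenerate: rank n
    intro hev hne
    have hbot : LinearMap.ker (rowMapLin Φ.adjMatrix) = ⊥ := by
      rw [Submodule.eq_bot_iff]
      intro x hx
      have hclosed := closed_form q x ((hkerN x).mp hx)
      obtain ⟨s, hs⟩ := hev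
      have hx0 : x ((0 : ℕ) : Fin n) = 0 := by
        by_contra hx0
        have h1 := hclosed 0 (n / 2)
        rw [show (0 + 2 * (n / 2)) = 0 + n by omega, fin_cast_add_n,
          show 2 * (n / 2) = n by omega, ← hgPr] at h1
        have h2 : (-1 : Quaternion ℝ) ^ (n / 2) * x ((0 : ℕ) : Fin n)
            = x ((0 : ℕ) : Fin n) * g := by
          conv_lhs => rw [h1]
          rw [← mul_assoc, ← mul_assoc, neg_one_pow_mul_self, one_mul]
        rw [neg_one_pow_comm] at h2
        exact hne (mul_left_cancel₀ hx0 h2).symm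
      have hx1 : x ((1 : ℕ) : Fin n) = 0 := by
        by_contra hx1
        have h1 := hclosed 1 (n / 2)
        rw [show (1 + 2 * (n / 2)) = 1 + n by omega, fin_cast_add_n,
          show 2 * (n / 2) = n by omega] at h1
        have h2 : (-1 : Quaternion ℝ) ^ (n / 2) * x ((1 : ℕ) : Fin n)
            = x ((1 : ℕ) : Fin n) * Pr q 1 n := by
          conv_lhs => rw [h1]
          rw [← mul_assoc, ← mul_assoc, neg_one_pow_mul_self, one_mul]
        rw [neg_one_pow_comm] at h2
        have h3 : Pr q 1 n = (-1 : Quaternion ℝ) ^ (n / 2) := (mul_left_cancel₀ hx1 h2).symm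
        have hw := wrap_conj q hper
        rw [h3, ← neg_one_pow_comm (q 0) (n / 2)] at hw
        have h4 := mul_right_cancel₀ hq0ne hw
        exact hne (by rw [hgPr, ← h4])
      funext j
      rw [Pi.zero_apply]
      rcases Nat.even_or_odd j.val with ⟨t, ht⟩ | ⟨t, ht⟩
      · have h1 := hclosed 0 t
        rw [show 0 + 2 * t = j.val by omega, Fin.cast_val_eq_self] at h1
        rw [h1, hx0, mul_zero, zero_mul]
      · have h1 := hclosed 1 t
        rw [show 1 + 2 * t = j.val by omega, Fin.cast_val_eq_self] at h1
        rw [h1, hx1, mul_zero, zero_mul]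
    have h0 := hrankd 0 (by rw [hbot]; exact finrank_bot _ _)
    omega
  · -- odd, nondegenerate: rank n
    intro hodd hre0
    have hgre : g.re ≠ 0 := by
      intro h
      apply hre0
      rw [hcoe, re_coe_mul, h, mul_zero]
    have hg2 : Pr q 0 n * Pr q 0 n ≠ -1 := by
      rw [← hgPr]
      intro h
      exact hgre ((sq_eq_neg_one_iff hgnorm).mp h)
    have hbot : LinearMap.ker (rowMapLin Φ.adjMatrix) = ⊥ := by
      rw [Submodule.eq_bot_iff]
      intro x hx
      have hclosed := closed_form q x ((hkerN x).mp hx)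
      have hx0 : x ((0 : ℕ) : Fin n) = 0 := by
        have h1 := hclosed 0 n
        rw [show (0 + 2 * n) = (0 + n) + n by ring, fin_cast_add_n, fin_cast_add_n,
          show 2 * n = n + n by ring, Pr_cycle q hper, hodd.neg_one_pow] at h1
        have h3 : x ((0 : ℕ) : Fin n) * (Pr q 0 n * Pr q 0 n) = - x ((0 : ℕ) : Fin n) := by
          conv_rhs => rw [h1]
          noncomm_ring
        have h2 : x ((0 : ℕ) : Fin n) * (Pr q 0 n * Pr q 0 n + 1) = 0 := by
          rw [mul_add, mul_one, h3, neg_add_cancel]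
        rcases mul_eq_zero.mp h2 with h | h
        · exact h
        · exact absurd (by rwa [add_eq_zero_iff_eq_neg] at h) hg2
      funext j
      rw [Pi.zero_apply]
      rcases Nat.even_or_odd j.val with ⟨t, ht⟩ | ho
      · have h1 := hclosed 0 t
        rw [show 0 + 2 * t = j.val by omega, Fin.cast_val_eq_self] at h1
        rw [h1, hx0, mul_zero, zero_mul]
      · obtain ⟨s, hs⟩ := hodd
        obtain ⟨t, ht⟩ := ho
        have h1 := hclosed 0 (t + s + 1)
        rw [show 0 + 2 * (t + s + 1) = j.val + n by omega, fin_cast_add_n,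
          Fin.cast_val_eq_self] at h1
        rw [h1, hx0, mul_zero, zero_mul]
    have h0 := hrankd 0 (by rw [hbot]; exact finrank_bot _ _)
    omega
  · -- odd, degenerate: rank n - 1
    intro hodd hre0
    have hgre : g.re = 0 := by
      rw [hcoe, re_coe_mul] at hre0
      rcases mul_eq_zero.mp hre0 with h | h
      · exact absurd h (pow_ne_zero _ (by norm_num))
      · exact h
    have hg2 : Pr q 0 n * Pr q 0 n = -1 := by
      rw [← hgPr]
      exact (sq_eq_neg_one_iff hgnorm).mpr hgre
    set v : Fin n → Quaternion ℝ := fun j => Vodd n q j.val with hv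
    have hmod : ∀ m : ℕ, Vodd n q (((m : ℕ) : Fin n)).val = Vodd n q m := by
      intro m
      rw [Fin.val_natCast]
      exact periodic_mod (Vodd n q) (Vodd_per q hper hodd hg2) m
    have hmem : v ∈ LinearMap.ker (rowMapLin Φ.adjMatrix) := by
      rw [hkerN]
      intro k
      show Vodd n q ((((k + 2 : ℕ)) : Fin n)).val
        = - Vodd n q ((((k : ℕ)) : Fin n)).val * q k * q (k + 1)
      rw [hmod, hmod, Vodd_rec q hper hodd]
    have hveven : ∀ (j : Fin n) (t : ℕ), j.val = 2 * t →
        v j = (-1 : Quaternion ℝ) ^ t * Pr q 0 (2 * t) := by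
      intro j t ht
      show Vodd n q j.val = _
      rw [Vodd, if_pos (by rw [ht]; exact ⟨t, by omega⟩), ht, show 2 * t / 2 = t by omega]
    have hvodd : ∀ (j : Fin n) (t : ℕ), Odd j.val → j.val + n = 2 * t →
        v j = (-1 : Quaternion ℝ) ^ t * Pr q 0 (2 * t) := by
      intro j t hjo ht
      have hjodd : ¬ Even j.val := by obtain ⟨r, hr⟩ := hjo; rintro ⟨u, hu⟩; omega
      show Vodd n q j.val = _
      rw [Vodd, if_neg hjodd, ht, show 2 * t / 2 = t by omega]
    have hker1 : LinearMap.ker (rowMapLin Φ.adjMatrix)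
        = Submodule.span (Quaternion ℝ) {v} := by
      apply le_antisymm
      · intro x hx
        have hclosed := closed_form q x ((hkerN x).mp hx)
        have hxeq : x = x ((0 : ℕ) : Fin n) • v := by
          funext j
          rw [Pi.smul_apply, smul_eq_mul]
          rcases Nat.even_or_odd j.val with ⟨t, ht⟩ | ho
          · have h1 := hclosed 0 t
            rw [show 0 + 2 * t = j.val by omega, Fin.cast_val_eq_self] at h1
            rw [h1, hveven j t (by omega), ← mul_assoc, ← neg_one_pow_comm]
          · obtain ⟨s, hs⟩ := hodd
            obtain ⟨t, ht⟩ := ho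
            have h1 := hclosed 0 (t + s + 1)
            rw [show 0 + 2 * (t + s + 1) = j.val + n by omega, fin_cast_add_n,
              Fin.cast_val_eq_self] at h1
            rw [h1, hvodd j (t + s + 1) ⟨t, ht⟩ (by omega), ← mul_assoc, ← neg_one_pow_comm]
        rw [hxeq]
        exact Submodule.smul_mem _ _ (Submodule.subset_span rfl)
      · rw [Submodule.span_le, Set.singleton_subset_iff]
        exact hmem
    have hvne : v ≠ 0 := by
      intro h
      have h1 := congrFun h (0 : Fin n)
      rw [hveven 0 0 (by rw [hval0]), Pi.zero_apply] at h1
      simp at h1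
    exact hrankd 1 (by rw [hker1]; exact finrank_span_singleton hvne)
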